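/- arXiv:math/0311398 — 2 statements merged into one kernel-verified Lean document; each statement's English description precedes it below -/
import Mathlib

section
/- Let X be a length space, q ∈ X, δ > 0, and let C : [0,L] → X be a rectifiable loop whose image is contained in the open ball B(q, δ). Then C is freely homotopic (within X) to a finite product of loops based at q, each of length strictly less than 2δ. -/
open Metric

/-- The length of a path in a metric space, as its total variation. -/
noncomputable def pathLength {X : Type*} [MetricSpace X] {x y : X} (γ : Path x y) : ENNReal :=
  eVariationOn (fun t => γ t) Set.univ

/-- A metric space is a length space if the distance between any two points is the
infimum of the lengths of paths joining them. -/
def IsLengthSpace (X : Type*) [MetricSpace X] : Prop :=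
  ∀ x y : X, ∀ ε > 0, ∃ γ : Path x y, pathLength γ < ENNReal.ofReal (dist x y + ε)

/-- Two loops are freely homotopic if they are homotopic through loops,
without fixing a base point. -/
def FreelyHomotopicLoops {X : Type*} [TopologicalSpace X] {x y : X}
    (α : Path x x) (β : Path y y) : Prop :=
  ∃ H : C(unitInterval × unitInterval, X),
    (∀ t, H (0, t) = α t) ∧ (∀ t, H (1, t) = β t) ∧ ∀ s, H (s, 0) = H (s, 1)

/-- The concatenation of a finite list of loops based at `q`. -/
noncomputable def loopProduct {X : Type*} [TopologicalSpace X] {q : X} :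
    List (Path q q) → Path q q
  | [] => Path.refl q
  | p :: l => p.trans (loopProduct l)


open Set unitInterval

section Free
variable {X : Type*} [TopologicalSpace X]

theorem freely_of_homotopic {x : X} {α β : Path x x} (h : α.Homotopic β) :
    FreelyHomotopicLoops α β := by
  obtain ⟨F⟩ := h
  exact ⟨F.toContinuousMap, fun t => F.apply_zero t, fun t => F.apply_one t,
    fun s => by show F (s,0) = F (s,1); rw [F.source s, F.target s]⟩

theorem FreelyHomotopicLoops.trans {x y z : X} {α : Path x x} {β : Path y y} {γ : Path z z}
    (h1 : FreelyHomotopicLoops α β) (h2 : FreelyHomotopicLoops β γ) :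
    FreelyHomotopicLoops α γ := by
  obtain ⟨H1, h1a, h1b, h1l⟩ := h1
  obtain ⟨H2, h2a, h2b, h2l⟩ := h2
  let F : ContinuousMap.Homotopy α.toContinuousMap β.toContinuousMap :=
    { toFun := fun p => H1 p
      continuous_toFun := H1.continuous
      map_zero_left := h1a
      map_one_left := h1b }
  let G : ContinuousMap.Homotopy β.toContinuousMap γ.toContinuousMap :=
    { toFun := fun p => H2 p
      continuous_toFun := H2.continuous
      map_zero_left := h2a
      map_one_left := h2b }
  refine ⟨(F.trans G).toContinuousMap, fun t => (F.trans G).apply_zero t,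
    fun t => (F.trans G).apply_one t, fun s => ?_⟩
  show (F.trans G) (s, 0) = (F.trans G) (s, 1)
  rw [ContinuousMap.Homotopy.trans_apply, ContinuousMap.Homotopy.trans_apply]
  split_ifs with h
  · exact h1l _
  · exact h2l _

end Free

section Conj
variable {X : Type*} [TopologicalSpace X] {q x : X}

noncomputable def conjH (sp : Path q x) (γ : Path x x) : C(I × I, X) where
  toFun p := if ((p.2 : ℝ)) ≤ 1/2 then sp.extend (1 - p.1 + 2*p.2*p.1)
    else if ((p.2 : ℝ)) ≤ 3/4 then γ.extend (4*p.2 - 2)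
    else sp.extend (1 - p.1 + (4 - 4*p.2)*p.1)
  continuous_toFun := by
    apply Continuous.if_le
    · fun_prop
    · apply Continuous.if_le
      · fun_prop
      · fun_prop
      · fun_prop
      · exact continuous_const
      · intro p hp
        rw [hp]
        have e1 : (4:ℝ)*(3/4) - 2 = 1 := by norm_num
        have e2 : 1 - (p.1:ℝ) + (4 - 4*(3/4))*p.1 = 1 := by ring
        rw [e1, e2, Path.extend_one, Path.extend_one]
    · fun_prop
    · exact continuous_const
    · intro p hp
      rw [if_pos (by rw [hp]; norm_num), hp]
      have : 1 - (p.1:ℝ) + 2*(1/2)*p.1 = 1 := by ring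
      rw [this]
      norm_num [Path.extend_one, Path.extend_zero]

theorem freely_conj_aux (sp : Path q x) (γ : Path x x) :
    FreelyHomotopicLoops ((Path.refl x).trans (γ.trans (Path.refl x))) (sp.trans (γ.trans sp.symm)) := by
  refine ⟨conjH sp γ, fun t => ?_, fun t => ?_, fun s => ?_⟩
  · show (if ((t : ℝ)) ≤ 1/2 then sp.extend (1 - ((0:I):ℝ) + 2*t*((0:I):ℝ))
      else if ((t : ℝ)) ≤ 3/4 then γ.extend (4*t - 2)
      else sp.extend (1 - ((0:I):ℝ) + (4 - 4*t)*((0:I):ℝ))) = _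
    rw [Path.trans_apply]
    by_cases h1 : (t:ℝ) ≤ 1/2
    · rw [dif_pos h1, if_pos h1, Path.refl_apply]
      have : 1 - ((0:I):ℝ) + 2*t*((0:I):ℝ) = 1 := by norm_num
      rw [this, Path.extend_one]
    · rw [dif_neg h1, if_neg h1, Path.trans_apply]
      by_cases h2 : (t:ℝ) ≤ 3/4
      · rw [if_pos h2]
        rw [dif_pos (show ((2:ℝ)*t - 1 ≤ 1/2) by linarith)]
        rw [Path.extend_apply _ (show (4*(t:ℝ) - 2) ∈ Set.Icc (0:ℝ) 1 from ⟨by linarith, by linarith⟩)]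
        exact congrArg (fun z => γ z) (Subtype.ext (by show (4*(t:ℝ)-2) = 2*(2*(t:ℝ)-1); ring))
      · rw [if_neg h2]
        rw [dif_neg (show ¬((2:ℝ)*t - 1 ≤ 1/2) by simp; linarith)]
        rw [Path.refl_apply]
        have : 1 - ((0:I):ℝ) + (4 - 4*t)*((0:I):ℝ) = 1 := by norm_num
        rw [this, Path.extend_one]
  · show (if ((t : ℝ)) ≤ 1/2 then sp.extend (1 - ((1:I):ℝ) + 2*t*((1:I):ℝ))
      else if ((t : ℝ)) ≤ 3/4 then γ.extend (4*t - 2)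
      else sp.extend (1 - ((1:I):ℝ) + (4 - 4*t)*((1:I):ℝ))) = _
    rw [Path.trans_apply]
    by_cases h1 : (t:ℝ) ≤ 1/2
    · rw [dif_pos h1, if_pos h1]
      rw [Path.extend_apply _ (show (1 - ((1:I):ℝ) + 2*t*((1:I):ℝ)) ∈ Set.Icc (0:ℝ) 1 from
        ⟨by norm_num [t.2.1], by norm_num; linarith⟩)]
      exact congrArg (fun z => sp z) (Subtype.ext (by show (1 - ((1:I):ℝ) + 2*t*((1:I):ℝ)) = 2*(t:ℝ); norm_num))
    · rw [dif_neg h1, if_neg h1, Path.trans_apply]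
      by_cases h2 : (t:ℝ) ≤ 3/4
      · rw [if_pos h2]
        rw [dif_pos (show ((2:ℝ)*t - 1 ≤ 1/2) by linarith)]
        rw [Path.extend_apply _ (show (4*(t:ℝ) - 2) ∈ Set.Icc (0:ℝ) 1 from ⟨by linarith, by linarith⟩)]
        exact congrArg (fun z => γ z) (Subtype.ext (by show (4*(t:ℝ)-2) = 2*(2*(t:ℝ)-1); ring))
      · rw [if_neg h2]
        rw [dif_neg (show ¬((2:ℝ)*t - 1 ≤ 1/2) by simp; linarith)]
        rw [Path.symm_apply]
        have ht1 : (t:ℝ) ≤ 1 := t.2.2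
        rw [Path.extend_apply _ (show (1 - ((1:I):ℝ) + (4 - 4*t)*((1:I):ℝ)) ∈ Set.Icc (0:ℝ) 1 from
          ⟨by norm_num; linarith, by norm_num; linarith⟩)]
        apply congrArg (fun z => sp z) (Subtype.ext ?_)
        show (1 - ((1:I):ℝ) + (4 - 4*t)*((1:I):ℝ)) = ((unitInterval.symm ⟨2*(2*(t:ℝ)-1)-1, _⟩ : I) : ℝ)
        rw [unitInterval.coe_symm_eq]
        norm_num
        ring
  · show (if ((0:I) : ℝ) ≤ 1/2 then sp.extend (1 - s + 2*((0:I):ℝ)*s)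
      else if ((0:I) : ℝ) ≤ 3/4 then γ.extend (4*((0:I):ℝ) - 2)
      else sp.extend (1 - s + (4 - 4*((0:I):ℝ))*s))
      = (if ((1:I) : ℝ) ≤ 1/2 then sp.extend (1 - s + 2*((1:I):ℝ)*s)
      else if ((1:I) : ℝ) ≤ 3/4 then γ.extend (4*((1:I):ℝ) - 2)
      else sp.extend (1 - s + (4 - 4*((1:I):ℝ))*s))
    rw [if_pos (by norm_num : ((0:I):ℝ) ≤ 1/2), if_neg (by norm_num : ¬ ((1:I):ℝ) ≤ 1/2),
      if_neg (by norm_num : ¬ ((1:I):ℝ) ≤ 3/4)]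
    congr 1
    norm_num

end Conj

section Length
variable {X : Type*} [MetricSpace X] {u v w : X}

theorem pathLength_eq (p : Path u v) : pathLength p = eVariationOn p.extend (Icc 0 1) := by
  have h : (fun t : unitInterval => p t) = p.extend ∘ (Subtype.val : unitInterval → ℝ) := by
    funext t
    exact (p.extend_extends' t).symm
  have key := eVariationOn.comp_eq_of_monotoneOn p.extend (Subtype.val : unitInterval → ℝ)
    (fun a _ b _ hab => hab : MonotoneOn _ univ)
  rw [Subtype.coe_image_univ] at key
  rw [pathLength, h]
  exact key

theorem pathLength_symm (p : Path u v) : pathLength p.symm = pathLength p := by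
  have h : (fun t : unitInterval => p.symm t) =
      (fun t : unitInterval => p t) ∘ unitInterval.symm := rfl
  have key := eVariationOn.comp_eq_of_antitoneOn (fun t : unitInterval => p t) unitInterval.symm
    (fun a _ b _ hab => by
      rw [← Subtype.coe_le_coe, unitInterval.coe_symm_eq, unitInterval.coe_symm_eq]
      have : (a:ℝ) ≤ b := hab
      linarith : AntitoneOn unitInterval.symm univ)
  rw [show unitInterval.symm '' univ = univ from
    (unitInterval.symmHomeomorph.surjective.surjOn).image_eq_of_mapsTo (mapsTo_univ _ _)] at key
  rw [pathLength, h]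
  exact key

theorem pathLength_trans_le (p : Path u v) (r : Path v w) :
    pathLength (p.trans r) ≤ pathLength p + pathLength r := by
  have hIcc : (Icc (0:unitInterval) 1) = univ := by
    ext t
    simp only [mem_Icc, mem_univ, iff_true]
    exact ⟨t.2.1, t.2.2⟩
  have half : (⟨1/2, by norm_num, by norm_num⟩ : unitInterval) ∈ (univ : Set unitInterval) :=
    mem_univ _
  have key := eVariationOn.Icc_add_Icc (fun t : unitInterval => (p.trans r) t)
    (a := 0) (b := ⟨1/2, by norm_num, by norm_num⟩) (c := 1)
    (by norm_num [← Subtype.coe_le_coe]) (by norm_num [← Subtype.coe_le_coe]) half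
  rw [univ_inter, univ_inter, univ_inter, hIcc] at key
  rw [pathLength, ← key]
  gcongr
  · -- first half
    have heq : EqOn (fun t : unitInterval => (p.trans r) t)
        ((fun t : unitInterval => p t) ∘ (fun t : unitInterval =>
          (⟨min (2*t) 1, le_min (mul_nonneg (by norm_num) t.2.1) zero_le_one, min_le_right _ _⟩ : unitInterval)))
        (Icc 0 ⟨1/2, by norm_num, by norm_num⟩) := by
      intro t ht
      have ht' : (t:ℝ) ≤ 1/2 := ht.2
      simp only [Function.comp_apply, Path.trans_apply, dif_pos ht']
      congr 1
      exact Subtype.ext (by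
        show 2*(t:ℝ) = min (2*(t:ℝ)) 1
        rw [min_eq_left (by linarith)])
    rw [eVariationOn.eq_of_eqOn heq]
    exact eVariationOn.comp_le_of_monotoneOn _ _
      (fun a _ b _ hab => by
        simp only [← Subtype.coe_le_coe, Subtype.mk_le_mk]
        have : (a:ℝ) ≤ b := hab
        exact min_le_min (by linarith) le_rfl)
      (mapsTo_univ _ _)
  · have heq : EqOn (fun t : unitInterval => (p.trans r) t)
        ((fun t : unitInterval => r t) ∘ (fun t : unitInterval =>
          (⟨max (2*t-1) 0, le_max_right _ _, max_le (by have := t.2.2; linarith) zero_le_one⟩ : unitInterval)))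
        (Icc ⟨1/2, by norm_num, by norm_num⟩ 1) := by
      intro t ht
      have ht' : (1:ℝ)/2 ≤ (t:ℝ) := ht.1
      by_cases h : (t:ℝ) ≤ 1/2
      · have : (t:ℝ) = 1/2 := le_antisymm h ht'
        simp only [Function.comp_apply, Path.trans_apply, dif_pos h]
        rw [← Path.extend_apply, ← Path.extend_extends']; simp only [Subtype.coe_mk, this]
        norm_num [Path.extend_one, Path.extend_zero]
      · simp only [Function.comp_apply, Path.trans_apply, dif_neg h]
        have hlt : (1:ℝ)/2 < t := lt_of_not_ge h
        congr 1
        exact Subtype.ext (by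
          show 2*(t:ℝ) - 1 = max (2*(t:ℝ)-1) 0
          rw [max_eq_left (by linarith)])
    rw [eVariationOn.eq_of_eqOn heq]
    exact eVariationOn.comp_le_of_monotoneOn _ _
      (fun a _ b _ hab => by
        simp only [← Subtype.coe_le_coe, Subtype.mk_le_mk]
        have : (a:ℝ) ≤ b := hab
        exact max_le_max (by linarith) le_rfl)
      (mapsTo_univ _ _)

end Length

section Subpath
variable {X : Type*} [TopologicalSpace X] {u v : X}

/-- The portion of a path between parameters `a ≤ b`. -/
noncomputable def Path.subpathR (γ : Path u v) (a b : ℝ) (h0 : 0 ≤ a) (hab : a ≤ b) (_h1 : b ≤ 1) :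
    Path (γ.extend a) (γ.extend b) :=
  (γ.truncate a b).cast (by rw [min_eq_left hab]) rfl

theorem Path.subpathR_apply (γ : Path u v) {a b : ℝ} (h0 : 0 ≤ a) (hab : a ≤ b) (h1 : b ≤ 1)
    (t : unitInterval) : γ.subpathR a b h0 hab h1 t = γ.extend (min (max t a) b) := rfl

theorem Path.subpathR_self (γ : Path u v) {a : ℝ} (h0 : 0 ≤ a) (h1 : a ≤ 1) :
    γ.subpathR a a h0 le_rfl h1 = Path.refl (γ.extend a) := by
  ext t
  rw [Path.subpathR_apply]
  simp [min_eq_right (le_max_right _ _)]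

/-- Gluing of subpaths, up to homotopy. -/
theorem Path.subpathR_trans_homotopic (γ : Path u v) {a b c : ℝ} (h0 : 0 ≤ a) (hab : a ≤ b)
    (hbc : b ≤ c) (h1 : c ≤ 1) :
    ((γ.subpathR a b h0 hab (hbc.trans h1)).trans
      (γ.subpathR b c (h0.trans hab) hbc h1)).Homotopic
      (γ.subpathR a c h0 (hab.trans hbc) h1) := by
  have hb0 : (0:ℝ) ≤ b := h0.trans hab
  have hb1 : b ≤ 1 := hbc.trans h1
  set f : unitInterval → unitInterval := fun t =>
    ⟨if (t:ℝ) ≤ 1/2 then min (2*t) b else max (2*t-1) b, by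
      split_ifs
      · exact ⟨le_min (mul_nonneg (by norm_num) t.2.1) hb0, (min_le_right _ _).trans hb1⟩
      · refine ⟨hb0.trans (le_max_right _ _), max_le (by have := t.2.2; linarith) hb1⟩⟩ with hf
  have hfc : Continuous f := by
    apply Continuous.subtype_mk
    apply Continuous.if_le
    · fun_prop
    · fun_prop
    · fun_prop
    · exact continuous_const
    · intro t ht
      rw [ht]
      norm_num [min_eq_right hb1, max_eq_right hb0]
  have hf0 : f 0 = 0 := by
    apply Subtype.ext
    show (if ((0:unitInterval):ℝ) ≤ 1/2 then min (2*((0:unitInterval):ℝ)) b else _) = 0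
    rw [if_pos (by norm_num)]
    norm_num [min_eq_left hb0]
  have hf1 : f 1 = 1 := by
    apply Subtype.ext
    show (if ((1:unitInterval):ℝ) ≤ 1/2 then _ else max (2*((1:unitInterval):ℝ)-1) b) = 1
    rw [if_neg (by norm_num)]
    norm_num [max_eq_left hb1]
  have hre : (γ.subpathR a c h0 (hab.trans hbc) h1).reparam f hfc hf0 hf1 =
      (γ.subpathR a b h0 hab hb1).trans (γ.subpathR b c hb0 hbc h1) := by
    ext t
    show γ.subpathR a c h0 (hab.trans hbc) h1 (f t) = _
    rw [Path.trans_apply, Path.subpathR_apply]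
    split_ifs with h
    · rw [Path.subpathR_apply]
      have hfv : ((f t):ℝ) = min (2*(t:ℝ)) b := by
        show (if (t:ℝ) ≤ 1/2 then min (2*(t:ℝ)) b else max (2*(t:ℝ)-1) b) = _
        rw [if_pos h]
      rw [hfv]
      congr 1
      rw [max_comm, max_min_distrib_left, max_eq_right hab, max_comm,
        min_eq_left ((min_le_right _ _).trans hbc)]
    · rw [Path.subpathR_apply]
      have hfv : ((f t):ℝ) = max (2*(t:ℝ)-1) b := by
        show (if (t:ℝ) ≤ 1/2 then min (2*(t:ℝ)) b else max (2*(t:ℝ)-1) b) = _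
        rw [if_neg h]
      rw [hfv]
      congr 1
      rw [max_assoc, max_eq_left hab]
  exact Path.Homotopic.symm ⟨(Path.Homotopy.reparam _ f hfc hf0 hf1).cast rfl hre⟩

end Subpath

section SubpathLength
variable {X : Type*} [MetricSpace X] {u v : X}

theorem Path.subpathR_length (γ : Path u v) {a b : ℝ} (h0 : 0 ≤ a) (hab : a ≤ b) (h1 : b ≤ 1) :
    pathLength (γ.subpathR a b h0 hab h1) = eVariationOn γ.extend (Icc a b) := by
  have h : (fun t : unitInterval => γ.subpathR a b h0 hab h1 t) =
      γ.extend ∘ (fun t : unitInterval => min (max (t:ℝ) a) b) := rfl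
  have hmono : MonotoneOn (fun t : unitInterval => min (max (t:ℝ) a) b) univ := by
    intro s _ t _ hst
    have : (s:ℝ) ≤ t := hst
    exact min_le_min (max_le_max this le_rfl) le_rfl
  have himg : (fun t : unitInterval => min (max (t:ℝ) a) b) '' univ = Icc a b := by
    apply Subset.antisymm
    · rintro _ ⟨t, -, rfl⟩
      exact ⟨le_min (le_max_right _ _) hab, min_le_right _ _⟩
    · rintro y ⟨hay, hyb⟩
      refine ⟨⟨y, h0.trans hay, hyb.trans h1⟩, mem_univ _, ?_⟩
      simp only
      rw [max_eq_left hay, min_eq_left hyb]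
  rw [pathLength, h, eVariationOn.comp_eq_of_monotoneOn γ.extend _ hmono, himg]

end SubpathLength

section Algebra
variable {X : Type*} [TopologicalSpace X] {q : X}

theorem homotopic_assoc {a b c d : X} (p : Path a b) (r : Path b c) (s : Path c d) :
    ((p.trans r).trans s).Homotopic (p.trans (r.trans s)) :=
  ⟨Path.Homotopy.transAssoc p r s⟩

theorem conj_chain {a b c : X} (sa : Path q a) (tb : Path q b) (rc : Path q c)
    (u : Path a b) (v : Path b c) :
    ((sa.trans (u.trans tb.symm)).trans (tb.trans (v.trans rc.symm))).Homotopic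
      (sa.trans ((u.trans v).trans rc.symm)) := by
  have A1 := homotopic_assoc sa (u.trans tb.symm) (tb.trans (v.trans rc.symm))
  have hmid : ((u.trans tb.symm).trans (tb.trans (v.trans rc.symm))).Homotopic
      ((u.trans v).trans rc.symm) := by
    have B1 := homotopic_assoc u tb.symm (tb.trans (v.trans rc.symm))
    have B2 : (tb.symm.trans (tb.trans (v.trans rc.symm))).Homotopic (v.trans rc.symm) := by
      have C1 := (homotopic_assoc tb.symm tb (v.trans rc.symm)).symm
      have C2 : ((tb.symm.trans tb).trans (v.trans rc.symm)).Homotopic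
          ((Path.refl b).trans (v.trans rc.symm)) :=
        Path.Homotopic.hcomp ⟨(Path.Homotopy.reflSymmTrans tb).symm⟩ (Path.Homotopic.refl _)
      have C3 : ((Path.refl b).trans (v.trans rc.symm)).Homotopic (v.trans rc.symm) :=
        ⟨Path.Homotopy.reflTrans _⟩
      exact (C1.trans C2).trans C3
    have B3 : (u.trans (tb.symm.trans (tb.trans (v.trans rc.symm)))).Homotopic
        (u.trans (v.trans rc.symm)) :=
      Path.Homotopic.hcomp (Path.Homotopic.refl u) B2
    exact (B1.trans B3).trans (homotopic_assoc u v rc.symm).symm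
  exact A1.trans (Path.Homotopic.hcomp (Path.Homotopic.refl sa) hmid)

end Algebra

section LemP
variable {X : Type*} [MetricSpace X]

theorem lemP (q : X) {x : X} (C : Path x x)
    (s : ∀ y : X, Path q y) (B E : ENNReal) (n : ℕ) (t : ℕ → ℝ)
    (hmem : ∀ i, i ≤ n → t i ∈ Icc (0:ℝ) 1)
    (hmono : ∀ i, i < n → t i ≤ t (i+1))
    (hB : ∀ i, i ≤ n → pathLength (s (C.extend (t i))) ≤ B)
    (hE : ∀ i, i < n → eVariationOn C.extend (Icc (t i) (t (i+1))) ≤ E) :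
    ∀ m k, k + m = n → ∃ L : List (Path q q),
      (∀ p ∈ L, pathLength p ≤ B + (E + B)) ∧
      ∃ (hk0 : (0:ℝ) ≤ t k) (hkn : t k ≤ t n) (hn1 : t n ≤ 1),
        (loopProduct L).Homotopic ((s (C.extend (t k))).trans
          ((C.subpathR (t k) (t n) hk0 hkn hn1).trans (s (C.extend (t n))).symm)) := by
  have tchain : ∀ a b, a ≤ b → b ≤ n → t a ≤ t b := by
    intro a b hab hbn
    induction b with
    | zero =>
      rw [show a = 0 by omega]
    | succ b ihb =>
      rcases Nat.lt_or_ge a (b+1) with h | h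
      · exact (ihb (by omega) (by omega)).trans (hmono b (by omega))
      · have : a = b + 1 := by omega
        rw [this]
  intro m
  induction m with
  | zero =>
    intro k hk
    have hkn : k = n := by omega
    subst hkn
    refine ⟨[], by simp, (hmem k le_rfl).1, le_rfl, (hmem k le_rfl).2, ?_⟩
    rw [Path.subpathR_self]
    set sg := s (C.extend (t k))
    have h1 : (sg.trans ((Path.refl (C.extend (t k))).trans sg.symm)).Homotopic
        (sg.trans sg.symm) :=
      Path.Homotopic.hcomp (Path.Homotopic.refl sg) ⟨Path.Homotopy.reflTrans sg.symm⟩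
    have h2 : (sg.trans sg.symm).Homotopic (Path.refl q) :=
      ⟨(Path.Homotopy.reflTransSymm sg).symm⟩
    exact (h1.trans h2).symm
  | succ m ih =>
    intro k hk
    obtain ⟨L', hlen', hk0', hkn', hn1', hhom'⟩ := ih (k+1) (by omega)
    have hkn : k ≤ n := by omega
    have hk1n : k + 1 ≤ n := by omega
    have hmk : t k ≤ t (k+1) := hmono k (by omega)
    set sk := s (C.extend (t k)) with hsk
    set sk1 := s (C.extend (t (k+1))) with hsk1
    set sn := s (C.extend (t n)) with hsn
    set piece := C.subpathR (t k) (t (k+1)) (hmem k hkn).1 hmk (hmem (k+1) hk1n).2 with hpiece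
    set sub2 := C.subpathR (t (k+1)) (t n) hk0' hkn' hn1' with hsub2
    refine ⟨(sk.trans (piece.trans sk1.symm)) :: L', ?_, (hmem k hkn).1,
      tchain k n (by omega) le_rfl, hn1', ?_⟩
    · intro p hp
      rcases List.mem_cons.mp hp with h | h
      · subst h
        refine (pathLength_trans_le _ _).trans (add_le_add (hB k hkn) ?_)
        refine (pathLength_trans_le _ _).trans (add_le_add ?_ ?_)
        · rw [hpiece, Path.subpathR_length]
          exact hE k (by omega)
        · rw [pathLength_symm]
          exact hB (k+1) hk1n
      · exact hlen' p h
    · show ((sk.trans (piece.trans sk1.symm)).trans (loopProduct L')).Homotopic _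
      have h1 : ((sk.trans (piece.trans sk1.symm)).trans (loopProduct L')).Homotopic
          ((sk.trans (piece.trans sk1.symm)).trans (sk1.trans (sub2.trans sn.symm))) :=
        Path.Homotopic.hcomp (Path.Homotopic.refl _) hhom'
      have h2 := conj_chain sk sk1 sn piece sub2
      have h3 : (piece.trans sub2).Homotopic
          (C.subpathR (t k) (t n) (hmem k hkn).1 (tchain k n (by omega) le_rfl) hn1') :=
        C.subpathR_trans_homotopic (hmem k hkn).1 hmk hkn' hn1'
      have h4 : (sk.trans ((piece.trans sub2).trans sn.symm)).Homotopic
          (sk.trans ((C.subpathR (t k) (t n) (hmem k hkn).1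
            (tchain k n (by omega) le_rfl) hn1').trans sn.symm)) :=
        Path.Homotopic.hcomp (Path.Homotopic.refl sk)
          (Path.Homotopic.hcomp h3 (Path.Homotopic.refl _))
      exact (h1.trans h2).trans h4

end LemP

section Partition
variable {X : Type*} [MetricSpace X]

theorem edist_chain (f : ℝ → X) (w : ℕ → ℝ) : ∀ a b : ℕ, a ≤ b →
    edist (f (w b)) (f (w a)) ≤ ∑ j ∈ Finset.Ico a b, edist (f (w (j+1))) (f (w j)) := by
  intro a b
  induction b with
  | zero =>
    intro hab
    rw [show a = 0 by omega]
    simp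
  | succ b ihb =>
    intro hab
    rcases Nat.lt_or_ge a (b+1) with h | h
    · have hab' : a ≤ b := by omega
      calc edist (f (w (b+1))) (f (w a))
          ≤ edist (f (w (b+1))) (f (w b)) + edist (f (w b)) (f (w a)) := edist_triangle _ _ _
        _ ≤ edist (f (w (b+1))) (f (w b)) + ∑ j ∈ Finset.Ico a b, edist (f (w (j+1))) (f (w j)) :=
            add_le_add le_rfl (ihb hab')
        _ = ∑ j ∈ Finset.Ico a (b+1), edist (f (w (j+1))) (f (w j)) := by
            rw [Finset.sum_Ico_succ_top hab']
            ring
    · rw [show a = b + 1 by omega]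
      simp
  
theorem refine_sum (f : ℝ → X) (w : ℕ → ℝ) (g : ℕ → ℕ) (hg : Monotone g) : ∀ m : ℕ,
    (∑ i ∈ Finset.range m, edist (f (w (g (i+1)))) (f (w (g i)))) ≤
      ∑ j ∈ Finset.Ico (g 0) (g m), edist (f (w (j+1))) (f (w j)) := by
  intro m
  induction m with
  | zero => simp
  | succ m ih =>
    rw [Finset.sum_range_succ,
      ← Finset.sum_Ico_consecutive _ (hg (Nat.zero_le m)) (hg (Nat.le_succ m))]
    exact add_le_add ih (edist_chain f w (g m) (g (m+1)) (hg (Nat.le_succ m)))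

theorem evar_additive (f : ℝ → X) (w : ℕ → ℝ) (hw : Monotone w) : ∀ l : ℕ,
    ∑ j ∈ Finset.range l, eVariationOn f (Icc (w j) (w (j+1))) =
      eVariationOn f (Icc (w 0) (w l)) := by
  intro l
  induction l with
  | zero =>
    simp only [Finset.range_zero, Finset.sum_empty, Icc_self]
    exact (eVariationOn.subsingleton f (by simp [Set.subsingleton_singleton])).symm
  | succ l ih =>
    rw [Finset.sum_range_succ, ih]
    have key := eVariationOn.Icc_add_Icc f (s := univ) (hw (Nat.zero_le l))
      (hw (Nat.le_succ l)) (mem_univ _)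
    rw [univ_inter, univ_inter, univ_inter] at key
    exact key

theorem exists_fine_partition (f : ℝ → X) (hf : Continuous f)
    (hV : eVariationOn f (Icc 0 1) ≠ ⊤) {ε : ℝ} (hε : 0 < ε) :
    ∃ n, ∃ t : ℕ → ℝ, t 0 = 0 ∧ t n = 1 ∧ (∀ i, i < n → t i ≤ t (i+1)) ∧
      (∀ i, i ≤ n → t i ∈ Icc (0:ℝ) 1) ∧
      ∀ i, i < n → eVariationOn f (Icc (t i) (t (i+1))) ≤ ENNReal.ofReal ε := by
  by_cases hVs : eVariationOn f (Icc 0 1) ≤ ENNReal.ofReal ε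
  · refine ⟨1, fun i => if i = 0 then 0 else 1, by simp, by simp, ?_, ?_, ?_⟩
    · intro i hi
      rw [show i = 0 by omega]
      norm_num
    · intro i hi
      interval_cases i <;> norm_num
    · intro i hi
      rw [show i = 0 by omega]
      simpa using hVs
  push_neg at hVs
  set V := eVariationOn f (Icc (0:ℝ) 1) with hVdef
  have hV0 : V ≠ 0 := by
    intro h
    rw [h] at hVs
    exact absurd hVs (by simp)
  set c := ENNReal.ofReal (ε/2) with hcdef
  have hc0 : c ≠ 0 := by
    rw [hcdef]
    simp only [ne_eq, ENNReal.ofReal_eq_zero, not_le]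
    linarith
  -- uniform continuity on [0,1]
  obtain ⟨η, hη0, hηuc⟩ : ∃ η > 0, ∀ a ∈ Icc (0:ℝ) 1, ∀ b ∈ Icc (0:ℝ) 1,
      dist a b < η → dist (f a) (f b) < ε/2 := by
    have huc : UniformContinuousOn f (Icc 0 1) :=
      isCompact_Icc.uniformContinuousOn_of_continuous hf.continuousOn
    rw [Metric.uniformContinuousOn_iff] at huc
    obtain ⟨η, hη0, h⟩ := huc (ε/2) (by linarith)
    exact ⟨η, hη0, fun a ha b hb hd => h a ha b hb hd⟩
  obtain ⟨N0, hN0⟩ := exists_nat_one_div_lt hη0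
  set Ng : ℕ := N0 + 1 with hNgdef
  have hNg0 : (0:ℝ) < Ng := by positivity
  have hNgη : (1:ℝ)/Ng < η := by
    rw [hNgdef]
    push_cast
    exact hN0
  -- near-optimal partition
  have hlt : V - c < V := ENNReal.sub_lt_self hV hV0 hc0
  rw [hVdef, eVariationOn, lt_iSup_iff] at hlt
  obtain ⟨⟨m, u, hu_mono, hu_mem⟩, hsum⟩ := hlt
  -- combined finset
  set Sf : Finset ℝ := (((Finset.range (m+1)).image u) ∪
    ((Finset.range (Ng+1)).image (fun k : ℕ => (k:ℝ)/Ng))) ∪ {0, 1} with hSfdef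
  have hS0 : (0:ℝ) ∈ Sf := by simp [hSfdef]
  have hS1 : (1:ℝ) ∈ Sf := by simp [hSfdef]
  have hSsub : ∀ y ∈ Sf, y ∈ Icc (0:ℝ) 1 := by
    intro y hy
    simp only [hSfdef, Finset.mem_union, Finset.mem_image, Finset.mem_range,
      Finset.mem_insert, Finset.mem_singleton] at hy
    rcases hy with (⟨i, _, rfl⟩ | ⟨k, hk, rfl⟩) | (rfl | rfl)
    · exact hu_mem i
    · constructor
      · positivity
      · rw [div_le_one hNg0]
        exact_mod_cast Nat.lt_succ_iff.mp hk
    · exact ⟨le_rfl, zero_le_one⟩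
    · exact ⟨zero_le_one, le_rfl⟩
  have hScard : Sf.card = (Sf.card - 1) + 1 :=
    (Nat.succ_pred_eq_of_pos (Finset.card_pos.mpr ⟨0, hS0⟩)).symm
  set n := Sf.card - 1 with hndef
  set e := Sf.orderIsoOfFin hScard with hedef
  set w : ℕ → ℝ := fun j => (e ⟨min j n, by omega⟩ : ℝ) with hwdef
  have wmono : Monotone w := by
    intro i j hij
    have : (⟨min i n, by omega⟩ : Fin (n+1)) ≤ ⟨min j n, by omega⟩ := by
      simp only [Fin.mk_le_mk]
      exact min_le_min hij le_rfl
    exact Subtype.coe_le_coe.mpr (e.monotone this)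
  have wmem : ∀ j, w j ∈ Icc (0:ℝ) 1 := fun j => hSsub _ (e _).2
  have wval : ∀ z : Sf, w ((e.symm z) : Fin (n+1)).1 = (z:ℝ) := by
    intro z
    have h1 : min ((e.symm z):Fin (n+1)).1 n = ((e.symm z):Fin (n+1)).1 :=
      min_eq_left (by omega)
    have h2 : (⟨min ((e.symm z):Fin (n+1)).1 n, by omega⟩ : Fin (n+1)) = e.symm z :=
      Fin.ext h1
    calc w ((e.symm z) : Fin (n+1)).1
        = ((e ⟨min ((e.symm z):Fin (n+1)).1 n, by omega⟩ : Sf) : ℝ) := rfl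
      _ = ((e (e.symm z) : Sf) : ℝ) := congrArg (fun a : Fin (n+1) => ((e a : Sf) : ℝ)) h2
      _ = (z : ℝ) := by rw [OrderIso.apply_symm_apply]
  have wlt : ∀ i j : ℕ, j ≤ n → w i < w j → i < j := by
    intro i j hj hwij
    by_contra h
    exact absurd (wmono (not_lt.mp h)) (not_le.mpr hwij)
  have w0 : w 0 = 0 := by
    have h0' : w ((e.symm ⟨0, hS0⟩) : Fin (n+1)).1 = 0 := wval ⟨0, hS0⟩
    refine le_antisymm ?_ (wmem 0).1
    rw [← h0']
    exact wmono (Nat.zero_le _)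
  have wn : w n = 1 := by
    have h1' : w ((e.symm ⟨1, hS1⟩) : Fin (n+1)).1 = 1 := wval ⟨1, hS1⟩
    refine le_antisymm (wmem n).2 ?_
    rw [← h1']
    exact wmono (by have := ((e.symm ⟨1, hS1⟩) : Fin (n+1)).isLt; omega)
  -- mesh control
  have mesh : ∀ j, j < n → w (j+1) - w j ≤ 1/Ng := by
    intro j hj
    by_contra hcon
    push_neg at hcon
    set kk : ℕ := Nat.floor ((Ng:ℝ) * w j) + 1 with hkkdef
    have hwj0 : (0:ℝ) ≤ w j := (wmem j).1
    have hwj1 : w j < 1 := by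
      have : w j < w (j+1) := by
        have hp : (0:ℝ) < 1/Ng := by positivity
        linarith
      exact lt_of_lt_of_le this (wmem (j+1)).2
    have h1 : w j < (kk:ℝ)/Ng := by
      rw [lt_div_iff₀ hNg0, mul_comm]
      push_cast
      simpa [hkkdef] using Nat.lt_floor_add_one ((Ng:ℝ) * w j)
    have h2 : (kk:ℝ)/Ng ≤ w j + 1/Ng := by
      rw [div_le_iff₀ hNg0, hkkdef, Nat.cast_add, Nat.cast_one]
      have hfl := Nat.floor_le (by positivity : (0:ℝ) ≤ (Ng:ℝ) * w j)
      have hcancel : (1/(Ng:ℝ)) * Ng = 1 := by field_simp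
      nlinarith [hfl, hcancel]
    have h3 : (kk:ℝ)/Ng < w (j+1) := by nlinarith
    have hkkN : kk ≤ Ng := by
      have : Nat.floor ((Ng:ℝ) * w j) < Ng := by
        rw [Nat.floor_lt (by positivity)]
        nlinarith
      omega
    have hgmem : ((kk:ℝ)/Ng) ∈ Sf := by
      simp only [hSfdef, Finset.mem_union, Finset.mem_image, Finset.mem_range]
      exact Or.inl (Or.inr ⟨kk, by omega, rfl⟩)
    set z : Sf := ⟨(kk:ℝ)/Ng, hgmem⟩ with hzdef
    have hz : w ((e.symm z) : Fin (n+1)).1 = (kk:ℝ)/Ng := wval z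
    have hlow : j < ((e.symm z) : Fin (n+1)).1 := by
      apply wlt _ _ (by have := ((e.symm z) : Fin (n+1)).isLt; omega)
      rw [hz]
      exact h1
    have hhigh : ((e.symm z) : Fin (n+1)).1 < j + 1 := by
      apply wlt _ _ (by omega)
      rw [hz]
      exact h3
    omega
  -- indices of the near-optimal partition inside `w`
  have humem : ∀ i : ℕ, u (min i m) ∈ Sf := by
    intro i
    simp only [hSfdef, Finset.mem_union, Finset.mem_image, Finset.mem_range]
    exact Or.inl (Or.inl ⟨min i m, by omega, rfl⟩)
  set g : ℕ → ℕ := fun i => ((e.symm ⟨u (min i m), humem i⟩) : Fin (n+1)).1 with hgdef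
  have hgmono : Monotone g := by
    intro i j hij
    have h1 : u (min i m) ≤ u (min j m) := hu_mono (min_le_min hij le_rfl)
    have h2 : (⟨u (min i m), humem i⟩ : Sf) ≤ ⟨u (min j m), humem j⟩ := h1
    exact e.symm.monotone h2
  have hgn : ∀ i, g i ≤ n := fun i =>
    Nat.lt_succ_iff.mp ((e.symm ⟨u (min i m), humem i⟩) : Fin (n+1)).isLt
  have hwg : ∀ i, i ≤ m → w (g i) = u i := by
    intro i him
    have hv := wval ⟨u (min i m), humem i⟩
    rw [hgdef]
    exact hv.trans (congrArg u (min_eq_left him))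
  have hsum' : V - c < ∑ i ∈ Finset.range m, edist (f (u (i+1))) (f (u i)) := hsum
  have hcomp : (∑ i ∈ Finset.range m, edist (f (u (i+1))) (f (u i))) ≤
      ∑ j ∈ Finset.range n, edist (f (w (j+1))) (f (w j)) := by
    have e1 : ∀ i ∈ Finset.range m, edist (f (u (i+1))) (f (u i)) =
        edist (f (w (g (i+1)))) (f (w (g i))) := by
      intro i hi
      rw [Finset.mem_range] at hi
      rw [hwg i (by omega), hwg (i+1) (by omega)]
    rw [Finset.sum_congr rfl e1]
    refine (refine_sum f w g hgmono m).trans (Finset.sum_le_sum_of_subset ?_)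
    intro j hj
    rw [Finset.mem_Ico] at hj
    rw [Finset.mem_range]
    have := hgn m
    omega
  have hadd : (∑ j ∈ Finset.range n, eVariationOn f (Icc (w j) (w (j+1)))) = V := by
    rw [evar_additive f w wmono n, w0, wn]
  set dw : ℕ → ENNReal := fun j => edist (f (w (j+1))) (f (w j)) with hdwdef
  have hdwle : ∀ j, dw j ≤ eVariationOn f (Icc (w j) (w (j+1))) := fun j =>
    eVariationOn.edist_le f ⟨wmono (Nat.le_succ j), le_rfl⟩ ⟨le_rfl, wmono (Nat.le_succ j)⟩
  have hdwsumle : (∑ j ∈ Finset.range n, dw j) ≤ V := by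
    rw [← hadd]
    exact Finset.sum_le_sum (fun j _ => hdwle j)
  have hVle : V ≤ (∑ j ∈ Finset.range n, dw j) + c :=
    tsub_le_iff_right.mp (le_of_lt (lt_of_lt_of_le hsum' hcomp))
  have hfin : (∑ j ∈ Finset.range n, dw j) ≠ ⊤ :=
    (lt_of_le_of_lt hdwsumle (lt_top_iff_ne_top.mpr hV)).ne
  refine ⟨n, w, w0, wn, fun i _ => wmono (Nat.le_succ i), fun i _ => wmem i, ?_⟩
  intro j hj
  have hRfin : (∑ j' ∈ (Finset.range n).erase j, dw j') ≠ ⊤ :=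
    ne_top_of_le_ne_top hfin (Finset.sum_le_sum_of_subset (Finset.erase_subset _ _))
  have hsplitV : eVariationOn f (Icc (w j) (w (j+1))) +
      (∑ j' ∈ (Finset.range n).erase j, dw j') ≤ V := by
    rw [← hadd]
    calc eVariationOn f (Icc (w j) (w (j+1))) + (∑ j' ∈ (Finset.range n).erase j, dw j')
        ≤ eVariationOn f (Icc (w j) (w (j+1))) +
          (∑ j' ∈ (Finset.range n).erase j, eVariationOn f (Icc (w j') (w (j'+1)))) :=
          add_le_add le_rfl (Finset.sum_le_sum fun j' _ => hdwle j')
      _ = ∑ j' ∈ Finset.range n, eVariationOn f (Icc (w j') (w (j'+1))) :=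
          Finset.add_sum_erase (Finset.range n)
            (fun j' => eVariationOn f (Icc (w j') (w (j'+1)))) (Finset.mem_range.mpr hj)
  have hsplitdw : (∑ j' ∈ Finset.range n, dw j') =
      dw j + ∑ j' ∈ (Finset.range n).erase j, dw j' :=
    (Finset.add_sum_erase (Finset.range n) dw (Finset.mem_range.mpr hj)).symm
  have hkey : eVariationOn f (Icc (w j) (w (j+1))) ≤ dw j + c := by
    have h6 : eVariationOn f (Icc (w j) (w (j+1))) + (∑ j' ∈ (Finset.range n).erase j, dw j')
        ≤ (dw j + c) + (∑ j' ∈ (Finset.range n).erase j, dw j') := by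
      calc eVariationOn f (Icc (w j) (w (j+1))) + (∑ j' ∈ (Finset.range n).erase j, dw j')
          ≤ V := hsplitV
        _ ≤ (∑ j' ∈ Finset.range n, dw j') + c := hVle
        _ = (dw j + ∑ j' ∈ (Finset.range n).erase j, dw j') + c := by rw [← hsplitdw]
        _ = (dw j + c) + (∑ j' ∈ (Finset.range n).erase j, dw j') := by ac_rfl
    exact (ENNReal.add_le_add_iff_right hRfin).mp h6
  have hdwsmall : dw j ≤ c := by
    show edist (f (w (j+1))) (f (w j)) ≤ c
    rw [edist_dist, hcdef]
    apply ENNReal.ofReal_le_ofReal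
    apply le_of_lt
    apply hηuc _ (wmem (j+1)) _ (wmem j)
    rw [Real.dist_eq, abs_of_nonneg (by linarith [wmono (Nat.le_succ j)] : (0:ℝ) ≤ w (j+1) - w j)]
    exact lt_of_le_of_lt (mesh j hj) hNgη
  calc eVariationOn f (Icc (w j) (w (j+1))) ≤ dw j + c := hkey
    _ ≤ c + c := add_le_add hdwsmall le_rfl
    _ = ENNReal.ofReal ε := by
        rw [hcdef, ← ENNReal.ofReal_add (by linarith) (by linarith)]
        norm_num

end Partition


section Helpers
variable {X : Type*} [TopologicalSpace X] {q : X}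

theorem path_apply_congr (s : ∀ y : X, Path q y) {y y' : X} (h : y = y') {a b : unitInterval}
    (hab : a = b) : (s y) a = (s y') b := by subst h; subst hab; rfl

theorem path_symm_apply_congr (s : ∀ y : X, Path q y) {y y' : X} (h : y = y') {a b : unitInterval}
    (hab : a = b) : (s y).symm a = (s y').symm b := by subst h; subst hab; rfl

end Helpers

/-- In a complete length space, a rectifiable loop whose image lies in an
open ball `B(q, δ)` is freely homotopic to a finite product of loops based at `q`,
each of length strictly less than `2δ`. -/
theorem loop_in_ball_freely_homotopic_to_product_of_short_loops
    {X : Type*} [MetricSpace X] [CompleteSpace X] (hX : IsLengthSpace X)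
    (q : X) (δ : ℝ) (hδ : 0 < δ) {x : X} (C : Path x x)
    (hrect : pathLength C < ⊤)
    (himage : Set.range C ⊆ ball q δ) :
    ∃ L : List (Path q q), (∀ p ∈ L, pathLength p < ENNReal.ofReal (2 * δ)) ∧
      FreelyHomotopicLoops C (loopProduct L) := by
  classical
  -- the maximal distance from `q` on the loop
  obtain ⟨t₀, -, ht₀⟩ := isCompact_univ.exists_isMaxOn univ_nonempty
    (Continuous.continuousOn (by fun_prop : Continuous fun t : unitInterval => dist q (C t)))
  set r := dist q (C t₀) with hrdef
  have hr : ∀ t : unitInterval, dist q (C t) ≤ r := fun t => ht₀ (mem_univ t)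
  have hrδ : r < δ := by
    have := himage ⟨t₀, rfl⟩
    rwa [mem_ball, dist_comm] at this
  have hr0 : (0:ℝ) ≤ r := dist_nonneg
  set ee := (δ - r)/4 with heedef
  have hee : 0 < ee := by rw [heedef]; linarith
  -- choose short paths from `q` to every point
  have hsex : ∀ y : X, ∃ p : Path q y, pathLength p < ENNReal.ofReal (dist q y + ee) :=
    fun y => hX q y ee hee
  choose s hs using hsex
  set B := ENNReal.ofReal (r + ee) with hBdef
  have hsB : ∀ t : unitInterval, pathLength (s (C t)) ≤ B :=
    fun t => le_of_lt (lt_of_lt_of_le (hs (C t)) (ENNReal.ofReal_le_ofReal (by linarith [hr t])))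
  have hVfin : eVariationOn C.extend (Icc 0 1) ≠ ⊤ := by
    rw [← pathLength_eq]
    exact hrect.ne
  obtain ⟨n, t, ht0, htn, htmono, htmem, htE⟩ :=
    exists_fine_partition C.extend C.continuous_extend hVfin hee
  set E := ENNReal.ofReal ee with hEdef
  have hB' : ∀ i, i ≤ n → pathLength (s (C.extend (t i))) ≤ B := by
    intro i hi
    rw [Path.extend_apply C (htmem i hi)]
    exact hsB _
  obtain ⟨L, hLlen, hk0, hkn, hn1, hhom⟩ :=
    lemP q C s B E n t htmem htmono hB' (fun i hi => htE i hi) n 0 (by omega)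
  refine ⟨L, ?_, ?_⟩
  · intro p hp
    refine lt_of_le_of_lt (hLlen p hp) ?_
    rw [hBdef, hEdef, ← ENNReal.ofReal_add (by linarith) (by linarith),
      ← ENNReal.ofReal_add (by linarith) (by linarith)]
    apply (ENNReal.ofReal_lt_ofReal_iff (by linarith)).mpr
    rw [heedef]
    linarith
  · have e0 : C.extend (t 0) = x := by rw [ht0]; exact C.extend_zero
    have e1 : C.extend (t n) = x := by rw [htn]; exact C.extend_one
    have heqfun : ∀ u : unitInterval,
        ((s (C.extend (t 0))).trans
          ((C.subpathR (t 0) (t n) hk0 hkn hn1).trans (s (C.extend (t n))).symm)) u =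
        ((s x).trans (C.trans (s x).symm)) u := by
      intro u
      rw [Path.trans_apply, Path.trans_apply]
      split_ifs with h1
      · exact path_apply_congr s e0 rfl
      · rw [Path.trans_apply, Path.trans_apply]
        have hu1 : (u:ℝ) ≤ 1 := u.2.2
        have hu2 : 1/2 < (u:ℝ) := lt_of_not_ge h1
        split_ifs with h2
        · have h2' : 2*(u:ℝ) - 1 ≤ 1/2 := h2
          rw [Path.subpathR_apply, ht0, htn]
          have hval : (2*(2*(u:ℝ)-1)) ∈ Set.Icc (0:ℝ) 1 := ⟨by linarith, by linarith⟩
          rw [max_eq_left hval.1, min_eq_left hval.2]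
          exact (Path.extend_apply C hval).trans (congrArg (fun z => C z) (Subtype.ext rfl))
        · exact path_symm_apply_congr s e1 rfl
    have heq : ((s (C.extend (t 0))).trans
        ((C.subpathR (t 0) (t n) hk0 hkn hn1).trans (s (C.extend (t n))).symm)) =
        ((s x).trans (C.trans (s x).symm)) :=
      Path.ext (funext heqfun)
    rw [heq] at hhom
    have f1 : FreelyHomotopicLoops C ((Path.refl x).trans (C.trans (Path.refl x))) :=
      freely_of_homotopic
        ⟨((Path.Homotopy.reflTrans (C.trans (Path.refl x))).trans
          (Path.Homotopy.transRefl C)).symm⟩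
    have f2 := freely_conj_aux (s x) C
    have f3 : FreelyHomotopicLoops ((s x).trans (C.trans (s x).symm)) (loopProduct L) :=
      freely_of_homotopic hhom.symm
    exact (f1.trans f2).trans f3
end

section
/- Let (K, d) be a compact metric space, 𝒟 the space of nonempty closed subsets of [0,D] containing 0 with the Hausdorff metric, and F : K → 𝒟 a continuous map. Then for every ε > 0 there exist finitely many elements A₁, …, A_N ∈ F(K) and radii ε₁, …, ε_N > 0 such that for every x ∈ K there is some i with F(x) contained in the open ε_i-neighborhood of A_i, and each ε_i-neighborhood T_{ε_i}(A_i) ⊂ [0,D] has Lebesgue measure less than ε. -/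
open Metric MeasureTheory

lemma small_thickening_aux {D : ℝ} (A : Set ℝ) (hA : A ⊆ Set.Icc 0 D)
    (hfin : ∀ δ > 0, (A ∩ Set.Icc δ D).Finite) {ε : ℝ} (hε : 0 < ε) :
    ∃ t > 0, volume (thickening t A ∩ Set.Icc 0 D) < ENNReal.ofReal ε := by
  set δ : ℝ := ε / 4 with hδ
  have hδpos : 0 < δ := by positivity
  obtain ⟨S, hSeq⟩ : ∃ S : Finset ℝ, ↑S = A ∩ Set.Icc δ D :=
    ⟨(hfin δ hδpos).toFinset, (hfin δ hδpos).coe_toFinset⟩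
  set n : ℕ := S.card with hn
  set t : ℝ := ε / (8 * (n + 1)) with ht
  have htpos : 0 < t := by positivity
  refine ⟨t, htpos, ?_⟩
  have hincl : thickening t A ∩ Set.Icc 0 D ⊆
      Set.Icc 0 (δ + t) ∪ ⋃ s ∈ S, ball s t := by
    rintro z ⟨hz1, hz2⟩
    rw [mem_thickening_iff] at hz1
    obtain ⟨y, hyA, hdzy⟩ := hz1
    by_cases hy : y < δ
    · left
      refine ⟨hz2.1, ?_⟩
      have h1 : z - y ≤ |z - y| := le_abs_self _
      have h2 : |z - y| < t := by rwa [Real.dist_eq] at hdzy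
      linarith
    · right
      have hyS : y ∈ S := by
        rw [← Finset.mem_coe, hSeq]
        exact ⟨hyA, le_of_not_gt hy, (hA hyA).2⟩
      exact Set.mem_biUnion hyS (by rwa [mem_ball])
  calc volume (thickening t A ∩ Set.Icc 0 D)
      ≤ volume (Set.Icc 0 (δ + t)) + ∑ s ∈ S, volume (ball s t) :=
        le_trans (measure_mono hincl) (le_trans (measure_union_le _ _)
          (by gcongr; exact measure_biUnion_finset_le _ _))
    _ = ENNReal.ofReal (δ + t) + n * ENNReal.ofReal (2 * t) := by
        rw [Real.volume_Icc, sub_zero]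
        congr 1
        have h3 : ∀ s ∈ S, volume (ball s t) = ENNReal.ofReal (2 * t) := fun s _ => by
          rw [Real.volume_ball]
        rw [Finset.sum_congr rfl h3, Finset.sum_const, nsmul_eq_mul, hn]
    _ = ENNReal.ofReal (δ + t + n * (2 * t)) := by
        rw [← ENNReal.ofReal_natCast n, ← ENNReal.ofReal_mul (Nat.cast_nonneg n),
          ← ENNReal.ofReal_add (by positivity) (mul_nonneg (Nat.cast_nonneg n) (by positivity))]
    _ < ENNReal.ofReal ε := by
        rw [ENNReal.ofReal_lt_ofReal_iff hε]
        have h1 : t * (8 * (n + 1)) = ε := by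
          rw [ht, div_mul_cancel₀]; positivity
        nlinarith [htpos, Nat.cast_nonneg (α := ℝ) n]

/-- clumping: If `K` is compact and `F` maps `K` continuously (for the
Hausdorff distance) into the closed subsets of `[0,D]` containing `0`, then for every
`ε > 0` there are finitely many values `A₁, …, A_N` of `F` and radii `ε_i > 0` such
that every `F(x)` is contained in the open `ε_i`-neighborhood of some `A_i`, and each
such neighborhood within `[0,D]` has Lebesgue measure less than `ε`. -/
theorem clumping_of_spectra {K : Type*} [MetricSpace K] [CompactSpace K] [Nonempty K]
    (D : ℝ) (hD : 0 < D) (F : K → Set ℝ)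
    (hclosed : ∀ x, IsClosed (F x)) (hzero : ∀ x, (0 : ℝ) ∈ F x)
    (hsub : ∀ x, F x ⊆ Set.Icc 0 D)
    (hdiscF : ∀ x, ∀ δ > 0, (F x ∩ Set.Icc δ D).Finite)
    (hcont : ∀ (x : K), ∀ ε > 0, ∃ δ > 0, ∀ y : K, dist x y < δ →
      hausdorffDist (F x) (F y) < ε) :
    ∀ ε > 0, ∃ (N : ℕ) (A : Fin N → Set ℝ) (r : Fin N → ℝ),
      (∀ i, ∃ x : K, F x = A i) ∧ (∀ i, 0 < r i) ∧
      (∀ x : K, ∃ i, F x ⊆ thickening (r i) (A i)) ∧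
      (∀ i, volume (thickening (r i) (A i) ∩ Set.Icc 0 D) < ENNReal.ofReal ε) := by
  intro ε hε
  -- for each x pick a radius t x with small thickening measure
  choose t htpos htvol using fun x : K =>
    small_thickening_aux (F x) (hsub x) (hdiscF x) hε
  -- continuity radii
  choose δ hδpos hδ using fun x : K => hcont x (t x) (htpos x)
  -- compactness: finite subcover of balls
  obtain ⟨s, -, hscover⟩ := isCompact_univ.elim_nhds_subcover
    (fun x : K => ball x (δ x)) (fun x _ => ball_mem_nhds x (hδpos x))
  have hne : ∀ x, (F x).Nonempty := fun x => ⟨0, hzero x⟩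
  have hbdd : ∀ x, Bornology.IsBounded (F x) := fun x =>
    (isBounded_Icc 0 D).subset (hsub x)
  refine ⟨s.card, fun i => F (s.equivFin.symm i : K), fun i => t (s.equivFin.symm i : K),
    fun i => ⟨_, rfl⟩, fun i => htpos _, ?_, fun i => htvol _⟩
  intro x
  have hx : x ∈ ⋃ y ∈ s, ball y (δ y) := hscover (Set.mem_univ x)
  obtain ⟨y, hy, hxy⟩ := Set.mem_iUnion₂.1 hx
  refine ⟨s.equivFin ⟨y, hy⟩, ?_⟩
  simp only [Equiv.symm_apply_apply]
  have hhd : hausdorffDist (F y) (F x) < t y := hδ y x (by rwa [mem_ball, dist_comm] at hxy)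
  have hedist : EMetric.hausdorffEdist (F x) (F y) ≠ ⊤ :=
    hausdorffEdist_ne_top_of_nonempty_of_bounded (hne x) (hne y) (hbdd x) (hbdd y)
  intro z hz
  rw [mem_thickening_iff_infDist_lt (hne y)]
  calc infDist z (F y) ≤ hausdorffDist (F x) (F y) :=
        infDist_le_hausdorffDist_of_mem hz hedist
    _ = hausdorffDist (F y) (F x) := hausdorffDist_comm ..
    _ < t y := hhd
end
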